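/- Let G be a finite simple graph that is {claw, K1 ∪ K3}-free and such that both G and its complement Ḡ are connected. Then G has no homogeneous set; that is, there is no set U of vertices with 2 ≤ |U| ≤ |V(G)| − 1 such that every vertex outside U is adjacent either to all vertices of U or to no vertex of U. -/

import Mathlib

open SimpleGraph

/-- `G` is `H`-free: no induced subgraph of `G` is isomorphic to `H`
(an induced copy is a graph embedding). -/
def InducedFree {α β : Type*} (H : SimpleGraph β) (G : SimpleGraph α) : Prop :=
  ¬ Nonempty (H ↪g G)

/-- The claw `K_{1,3}`: center `0` with leaves `1,2,3`. -/
def claw : SimpleGraph (Fin 4) := fromEdgeSet {s(0,1), s(0,2), s(0,3)}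

/-- `K1 ∪ K3`: a triangle `1,2,3` together with the isolated vertex `0`
(the complement of the claw). -/
def K1uK3 : SimpleGraph (Fin 4) := fromEdgeSet {s(1,2), s(1,3), s(2,3)}

/-- `U` is a homogeneous set of `G`: `2 ≤ |U| ≤ |V| − 1` and every vertex
outside `U` is adjacent to all of `U` or to none of `U`. -/
def IsHomogeneousSet {V : Type*} [Fintype V] (G : SimpleGraph V) (U : Set V) : Prop :=
  2 ≤ U.ncard ∧ U.ncard ≤ Fintype.card V - 1 ∧
    ∀ v ∉ U, (∀ u ∈ U, G.Adj v u) ∨ (∀ u ∈ U, ¬ G.Adj v u)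

/-- In a connected graph, any proper nonempty set has an edge leaving it. -/
lemma cross_edge {V : Type*} (G : SimpleGraph V) (h : G.Connected) (S : Set V)
    (hs : S.Nonempty) (hs' : Sᶜ.Nonempty) : ∃ x y, x ∈ S ∧ y ∉ S ∧ G.Adj x y := by
  obtain ⟨x, hx⟩ := hs
  obtain ⟨y, hy⟩ := hs'
  obtain ⟨p⟩ := h.preconnected x y
  obtain ⟨d, _, hd1, hd2⟩ := p.exists_boundary_dart S hx hy
  exact ⟨d.fst, d.snd, hd1, hd2, d.adj⟩

lemma claw_emb {V : Type*} (G : SimpleGraph V) {a u v b : V}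
    (huv : u ≠ v) (hub : u ≠ b) (hvb : v ≠ b)
    (hau : G.Adj a u) (hav : G.Adj a v) (hab : G.Adj a b)
    (nuv : ¬ G.Adj u v) (nub : ¬ G.Adj u b) (nvb : ¬ G.Adj v b) :
    Nonempty (claw ↪g G) := by
  refine ⟨⟨⟨![a, u, v, b], ?_⟩, ?_⟩⟩
  · intro i j hij
    fin_cases i <;> fin_cases j <;> simp_all
  · intro i j
    change G.Adj (![a, u, v, b] i) (![a, u, v, b] j) ↔ claw.Adj i j
    fin_cases i <;> fin_cases j <;>
      simp_all [claw, G.adj_comm]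

lemma K1uK3_emb {V : Type*} (G : SimpleGraph V) {a u v b : V}
    (huv : u ≠ v) (hub : u ≠ b) (hvb : v ≠ b) (hab : a ≠ b)
    (hau : G.Adj a u) (hav : G.Adj a v) (huv' : G.Adj u v)
    (nab : ¬ G.Adj a b) (nub : ¬ G.Adj u b) (nvb : ¬ G.Adj v b) :
    Nonempty (K1uK3 ↪g G) := by
  refine ⟨⟨⟨![b, a, u, v], ?_⟩, ?_⟩⟩
  · intro i j hij
    fin_cases i <;> fin_cases j <;> simp_all
  · intro i j
    change G.Adj (![b, a, u, v] i) (![b, a, u, v] j) ↔ K1uK3.Adj i j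
    fin_cases i <;> fin_cases j <;>
      simp_all [K1uK3, G.adj_comm]

theorem claw_coclaw_free_no_homogeneous {V : Type*} [Fintype V]
    (G : SimpleGraph V) (hconn : G.Connected) (hcoconn : Gᶜ.Connected)
    (hclaw : InducedFree claw G) (hK1uK3 : InducedFree K1uK3 G) :
    ¬ ∃ U : Set V, IsHomogeneousSet G U := by
  rintro ⟨U, h2, hle, hhom⟩
  -- U has two distinct elements
  have hUfin : U.Finite := Set.toFinite U
  obtain ⟨u, v, hu, hv, huv⟩ := Set.one_lt_ncard_iff hUfin |>.mp (by omega)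
  have hUne : U.Nonempty := ⟨u, hu⟩
  -- Uᶜ nonempty
  have hcard : U.ncard ≤ Fintype.card V := by
    have := Set.ncard_le_ncard (Set.subset_univ U) (Set.toFinite _)
    rwa [Set.ncard_univ, Nat.card_eq_fintype_card] at this
  have hUcne : Uᶜ.Nonempty := by
    rw [Set.nonempty_compl]
    intro h
    rw [h, Set.ncard_univ, Nat.card_eq_fintype_card] at hle
    omega
  -- A and B
  set A : Set V := {y | y ∉ U ∧ ∀ w ∈ U, G.Adj y w} with hA
  set B : Set V := {y | y ∉ U ∧ ∀ w ∈ U, ¬ G.Adj y w} with hB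
  have hAB : ∀ y ∉ U, y ∈ A ∨ y ∈ B := by
    intro y hy
    rcases hhom y hy with h | h
    · exact Or.inl ⟨hy, h⟩
    · exact Or.inr ⟨hy, h⟩
  -- A nonempty via G connected
  obtain ⟨x, y, hxU, hyU, hxy⟩ := cross_edge G hconn U hUne hUcne
  have hAne : A.Nonempty := by
    rcases hAB y hyU with h | h
    · exact ⟨y, h⟩
    · exact absurd (hxy.symm) (h.2 x hxU)
  -- B nonempty via Gᶜ connected
  obtain ⟨x', y', hxU', hyU', hxy'⟩ := cross_edge Gᶜ hcoconn U hUne hUcne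
  have hBne : B.Nonempty := by
    rcases hAB y' hyU' with h | h
    · exact absurd (h.2 x' hxU') (hxy'.symm.2)
    · exact ⟨y', h⟩
  obtain ⟨a, haU, haAdj⟩ := hAne
  obtain ⟨b, hbU, hbAdj⟩ := hBne
  by_cases hadj : G.Adj u v
  · -- every A-B pair adjacent, else K1∪K3
    have key : ∀ a' ∈ A, ∀ b' ∈ B, G.Adj a' b' := by
      rintro a' ⟨haU', ha'⟩ b' ⟨hbU', hb'⟩
      by_contra hne
      have hab' : a' ≠ b' := by
        rintro rfl; exact hb' u hu (ha' u hu)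
      exact hK1uK3 (K1uK3_emb G huv (by rintro rfl; exact hbU' hu) (by rintro rfl; exact hbU' hv) hab'
        (ha' u hu) (ha' v hv) hadj hne ((hb' u hu).elim <| G.adj_comm _ _ |>.mp ·)
        ((hb' v hv).elim <| G.adj_comm _ _ |>.mp ·))
    -- A is separated in Gᶜ
    obtain ⟨x, y, hxA, hyA, hxy⟩ := cross_edge Gᶜ hcoconn A ⟨a, haU, haAdj⟩
      ⟨u, fun h => h.1 hu⟩
    rcases hxy with ⟨hne, hnadj⟩
    by_cases hyU2 : y ∈ U
    · exact hnadj (hxA.2 y hyU2)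
    · rcases hAB y hyU2 with h | h
      · exact hyA h
      · exact hnadj (key x hxA y h)
  · -- every A-B pair nonadjacent, else claw
    have key : ∀ a' ∈ A, ∀ b' ∈ B, ¬ G.Adj a' b' := by
      rintro a' ⟨haU', ha'⟩ b' ⟨hbU', hb'⟩ hne
      exact hclaw (claw_emb G huv (by rintro rfl; exact hbU' hu) (by rintro rfl; exact hbU' hv)
        (ha' u hu) (ha' v hv) hne hadj
        ((hb' u hu).elim <| G.adj_comm _ _ |>.mp ·)
        ((hb' v hv).elim <| G.adj_comm _ _ |>.mp ·))
    -- B is separated in G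
    obtain ⟨x, y, hxB, hyB, hxy⟩ := cross_edge G hconn B ⟨b, hbU, hbAdj⟩
      ⟨u, fun h => h.1 hu⟩
    by_cases hyU2 : y ∈ U
    · exact hxB.2 y hyU2 hxy
    · rcases hAB y hyU2 with h | h
      · exact key y h x hxB hxy.symm
      · exact hyB h
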